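/- The simplicial cone C(n,i) = {y ∈ H(n) : y_i + ... + y_{i+t} ≤ 0, t = 0,...,n-1} (indices mod n+1) is generated by the vectors {v_0,...,v_n} \ {v_i}, where v_j = e_j - e_{j-1} (indices mod n+1) and e_j are standard unit vectors. -/

import Mathlib

/-- The hyperplane `H(n) = {y ∈ ℝ^{n+1} : y_0 + ⋯ + y_n = 0}`. -/
def hyperplaneH (n : ℕ) : Set (Fin (n + 1) → ℝ) :=
  {y | ∑ i, y i = 0}

/-- The simplicial cone `C(n,i) ⊆ H(n)` cut out by requiring all consecutive
cyclic partial sums `y_i + ⋯ + y_{i+t} ≤ 0` for `t = 0,…,n-1` (indices mod `n+1`). -/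
def coneC (n : ℕ) (i : Fin (n + 1)) : Set (Fin (n + 1) → ℝ) :=
  {y | y ∈ hyperplaneH n ∧
    ∀ t < n, ∑ s ∈ Finset.range (t + 1), y (i + Fin.ofNat (n + 1) s) ≤ 0}

/-- The vector `v_j = -e_{j-1} + e_j` (indices mod `n+1`). -/
def vecV (n : ℕ) (j : Fin (n + 1)) : Fin (n + 1) → ℝ :=
  Pi.single j 1 - Pi.single (j - 1) 1

open Fin.NatCast Fin.CommRing

lemma sum_smul_vecV (n : ℕ) (c : Fin (n+1) → ℝ) (k : Fin (n+1)) :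
    (∑ j, c j • vecV n j) k = c k - c (k + 1) := by
  simp only [Finset.sum_apply, Pi.smul_apply, vecV, Pi.sub_apply, smul_eq_mul, mul_sub,
    Finset.sum_sub_distrib, Pi.single_apply]
  congr 1
  · simp
  · simp only [eq_sub_iff_add_eq, mul_ite, mul_one, mul_zero]
    rw [Finset.sum_eq_single (k+1)] <;> simp +contextual [eq_comm]

lemma cyc_sum (n : ℕ) (i : Fin (n+1)) (y : Fin (n+1) → ℝ) :
    ∑ s ∈ Finset.range (n+1), y (i + (s : Fin (n+1))) = ∑ k, y k := by
  rw [← Fin.sum_univ_eq_sum_range (fun s => y (i + (s : Fin (n+1)))) (n+1)]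
  simp only [Fin.cast_val_eq_self]
  exact Equiv.sum_comp (Equiv.addLeft i) y

/-- The cone `C(n,i)` is generated by the vectors `{v_0,…,v_n} \ {v_i}`:
it consists exactly of the nonnegative linear combinations of the `v_j`, `j ≠ i`. -/
theorem coneC_eq_generated (n : ℕ) (i : Fin (n + 1)) :
    coneC n i = {y | ∃ c : Fin (n + 1) → ℝ,
      (∀ j, 0 ≤ c j) ∧ c i = 0 ∧ y = ∑ j, c j • vecV n j} := by
  ext y
  constructor
  · rintro ⟨hsum, hpart⟩
    simp only [Fin.ofNat_eq_cast] at hpart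
    refine ⟨fun j => -(∑ s ∈ Finset.range ((j - i).val), y (i + (s : Fin (n+1)))), ?_, ?_, ?_⟩
    · intro j
      rcases Nat.eq_zero_or_pos (j - i).val with h0 | hpos
      · simp [h0]
      · have hm : (j - i).val ≤ n := Fin.is_le _
        have := hpart ((j - i).val - 1) (by omega)
        rw [show (j - i).val - 1 + 1 = (j - i).val from by omega] at this
        simpa using neg_nonneg.mpr this
    · simp
    · funext k
      rw [sum_smul_vecV]
      set m := (k - i).val with hm
      have hkm : i + ((m : ℕ) : Fin (n+1)) = k := by
        rw [hm, Fin.cast_val_eq_self, add_sub_cancel]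
      have hmn : m ≤ n := Fin.is_le _
      rcases lt_or_eq_of_le hmn with hlt | heq
      · have hk1 : ((k + 1 - i).val) = m + 1 := by
          have : k + 1 - i = (k - i) + 1 := by ring
          rw [this, Fin.val_add_one_of_lt]
          exact Fin.lt_last_iff_ne_last.mpr (by
            intro h
            rw [h] at hm
            simp [Fin.last] at hm
            omega)
        simp only [hk1, ← hm]
        rw [Finset.sum_range_succ]
        rw [hkm]
        ring
      · -- m = n, wraparound
        have hlast : k - i = Fin.last n := by
          apply Fin.ext; simp [← hm, heq, Fin.last]
        have hk1 : ((k + 1 - i).val) = 0 := by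
          have : k + 1 - i = (k - i) + 1 := by ring
          rw [this, hlast]
          simp
        simp only [hk1, ← hm]
        rw [Finset.range_zero, Finset.sum_empty]
        have htot : ∑ s ∈ Finset.range (n+1), y (i + (s : Fin (n+1))) = 0 := by
          rw [cyc_sum]; exact hsum
        rw [Finset.sum_range_succ] at htot
        rw [heq] at hkm
        rw [hkm] at htot
        rw [heq]
        linarith
  · rintro ⟨c, hc0, hci, rfl⟩
    have hy : ∀ k, (∑ j, c j • vecV n j) k = c k - c (k + 1) := sum_smul_vecV n c
    constructor
    · simp only [hyperplaneH, Set.mem_setOf_eq]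
      rw [Finset.sum_congr rfl fun k _ => hy k, Finset.sum_sub_distrib]
      rw [show ∑ k, c (k + 1) = ∑ k, c k from Equiv.sum_comp (Equiv.addRight 1) c]
      ring
    · intro t ht
      simp only [Fin.ofNat_eq_cast]
      have hstep : ∀ s : ℕ, (∑ j, c j • vecV n j) (i + (s : Fin (n+1)))
          = c (i + (s : Fin (n+1))) - c (i + ((s+1 : ℕ) : Fin (n+1))) := by
        intro s
        rw [hy]
        push_cast
        ring_nf
      rw [Finset.sum_congr rfl fun s _ => hstep s, Finset.sum_range_sub' (fun s => c (i + (s : Fin (n+1))))]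
      simp [hci, hc0]
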